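/- Let H be a graph with at least two edges. Then the maximum running time of the H-bootstrap process over all n-vertex starting graphs satisfies M_H(n) ≤ 2·ex(n,H), where ex(n,H) is the Turán number of H. -/

import Mathlib

open SimpleGraph Finset

/-- `f` maps `H` to a copy of `H` inside `G`. -/
def IsCopyOf {α V : Type*} (H : SimpleGraph α) (G : SimpleGraph V) (f : α → V) : Prop :=
  Function.Injective f ∧ ∀ a b, H.Adj a b → G.Adj (f a) (f b)

/-- One round of the `H`-bootstrap process: add every edge whose addition
creates a new copy of `H` (i.e. the edge is the last missing edge of a copy of `H`). -/
def bootStep {α V : Type*} (H : SimpleGraph α) (G : SimpleGraph V) : SimpleGraph V where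
  Adj u v := G.Adj u v ∨ (u ≠ v ∧ ∃ f : α → V,
      IsCopyOf H (G ⊔ SimpleGraph.fromEdgeSet {s(u, v)}) f ∧
      ∃ a b, H.Adj a b ∧ f a = u ∧ f b = v)
  symm := by
    constructor
    intro u v h
    rcases h with h | ⟨hne, f, hf, a, b, hab, hfa, hfb⟩
    · exact Or.inl h.symm
    · refine Or.inr ⟨hne.symm, f, ?_, b, a, hab.symm, hfb, hfa⟩
      rwa [Sym2.eq_swap]
  loopless := by
    constructor
    intro u h
    rcases h with h | ⟨hne, _⟩
    · exact G.irrefl h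
    · exact hne rfl

/-- The `H`-bootstrap process on starting graph `G`. -/
def bootProc {α V : Type*} (H : SimpleGraph α) (G : SimpleGraph V) : ℕ → SimpleGraph V
  | 0 => G
  | (n + 1) => bootStep H (bootProc H G n)

/-- The running time of the `H`-process on `G`: the least `t` with `G_{t+1} = G_t`. -/
noncomputable def bootRunTime {α V : Type*} (H : SimpleGraph α) (G : SimpleGraph V) : ℕ :=
  sInf {t | bootProc H G (t + 1) = bootProc H G t}

/-- The final (stabilised) graph of the `H`-process on `G`. -/
noncomputable def bootFinal {α V : Type*} (H : SimpleGraph α) (G : SimpleGraph V) :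
    SimpleGraph V :=
  bootProc H G (bootRunTime H G)

/-- `G` contains a copy of `H` (as a subgraph). -/
def HasCopy {α V : Type*} (H : SimpleGraph α) (G : SimpleGraph V) : Prop :=
  ∃ f : α → V, IsCopyOf H G f

/-- The Turán (extremal) number `ex(n, H)`: the maximum number of edges of an
`n`-vertex `H`-free graph. -/
noncomputable def exNum {α : Type*} (n : ℕ) (H : SimpleGraph α) : ℕ :=
  sSup {m | ∃ G : SimpleGraph (Fin n), ¬ HasCopy H G ∧ G.edgeSet.ncard = m}


lemma le_bootStep_aux {α V : Type*} (H : SimpleGraph α) (G : SimpleGraph V) :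
    G ≤ bootStep H G := by
  intro u v h
  exact Or.inl h

lemma bootProc_mono_aux {α V : Type*} (H : SimpleGraph α) (G : SimpleGraph V) :
    Monotone (bootProc H G) := by
  apply monotone_nat_of_le_succ
  intro t
  exact le_bootStep_aux H (bootProc H G t)

lemma bootStep_adj_of_copy_aux {α V : Type*} (H : SimpleGraph α) (G' : SimpleGraph V)
    (f : α → V) (hinj : Function.Injective f) (a₀ b₀ : α) (h₀ : H.Adj a₀ b₀)
    (h : ∀ a b, H.Adj a b → G'.Adj (f a) (f b) ∨ s(f a, f b) = s(f a₀, f b₀)) :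
    (bootStep H G').Adj (f a₀) (f b₀) := by
  have hne : f a₀ ≠ f b₀ := fun he => h₀.ne (hinj he)
  refine Or.inr ⟨hne, f, ⟨hinj, ?_⟩, a₀, b₀, h₀, rfl, rfl⟩
  intro a b hab
  rcases h a b hab with h' | h'
  · exact Or.inl h'
  · refine Or.inr ?_
    rw [SimpleGraph.fromEdgeSet_adj]
    exact ⟨h', fun he => hab.ne (hinj he)⟩

/-- For any `H` with at least two edges, the running time of the `H`-process on any
`n`-vertex graph is at most `2 · ex(n, H)`; i.e. `M_H(n) ≤ 2 ex(n, H)`. -/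
theorem stmt_8 {α : Type*} (H : SimpleGraph α) (hH : 2 ≤ H.edgeSet.ncard)
    (n : ℕ) (G : SimpleGraph (Fin n)) :
    bootRunTime H G ≤ 2 * exNum n H := by
  classical
  set T := bootRunTime H G with hTdef
  by_cases hT0 : T = 0
  · omega
  have hmono := bootProc_mono_aux H G
  have hgrow : ∀ t, t < T → bootProc H G t ≠ bootProc H G (t + 1) := by
    intro t ht hEq
    have : T ≤ t := Nat.sInf_le hEq.symm
    omega
  set K := (T + 1) / 2 with hKdef
  have hedge : ∀ k, k < K → ∃ e, e ∈ (bootProc H G (2 * k + 1)).edgeSet ∧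
      e ∉ (bootProc H G (2 * k)).edgeSet := by
    intro k hk
    have h1 : 2 * k < T := by omega
    have hne := hgrow (2 * k) h1
    have hsub : (bootProc H G (2 * k)).edgeSet ⊆ (bootProc H G (2 * k + 1)).edgeSet :=
      SimpleGraph.edgeSet_mono (hmono (Nat.le_succ _))
    have hns : ¬ (bootProc H G (2 * k + 1)).edgeSet ⊆ (bootProc H G (2 * k)).edgeSet := by
      intro h
      exact hne (SimpleGraph.edgeSet_inj.mp (Set.Subset.antisymm hsub h))
    obtain ⟨e, he1, he2⟩ := Set.not_subset.mp hns
    exact ⟨e, he1, he2⟩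
  have hK1 : 0 < K := by omega
  have hNE : Nonempty (Sym2 (Fin n)) := ⟨(hedge 0 hK1).choose⟩
  set ech : ℕ → Sym2 (Fin n) :=
    fun k => if h : k < K then (hedge k h).choose else Classical.arbitrary _ with hechdef
  have hech1 : ∀ k, (h : k < K) → ech k ∈ (bootProc H G (2 * k + 1)).edgeSet := by
    intro k h
    simp only [hechdef, dif_pos h]
    exact (hedge k h).choose_spec.1
  have hech2 : ∀ k, (h : k < K) → ech k ∉ (bootProc H G (2 * k)).edgeSet := by
    intro k h
    simp only [hechdef, dif_pos h]
    exact (hedge k h).choose_spec.2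
  have hkey : ∀ k k', k < k' → k' < K → ech k ≠ ech k' := by
    intro k k' hlt hk' hEq
    have hkK : k < K := hlt.trans hk'
    have h1 : ech k ∈ (bootProc H G (2 * k')).edgeSet := by
      have := hech1 k hkK
      exact SimpleGraph.edgeSet_mono (hmono (by omega : 2 * k + 1 ≤ 2 * k')) this
    exact hech2 k' hk' (hEq ▸ h1)
  have hechinj : Set.InjOn ech (Set.Iio K) := by
    intro k hk k' hk' hEq
    by_contra hne
    rcases lt_or_gt_of_ne hne with h | h
    · exact hkey k k' h hk' hEq
    · exact hkey k' k h hk hEq.symm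
  set F : SimpleGraph (Fin n) := SimpleGraph.fromEdgeSet (ech '' Set.Iio K) with hFdef
  have hFedge : F.edgeSet = ech '' Set.Iio K := by
    rw [hFdef, SimpleGraph.edgeSet_fromEdgeSet]
    ext e
    simp only [Set.mem_diff, Set.mem_setOf_eq, and_iff_left_iff_imp]
    rintro ⟨k, hk, rfl⟩
    exact SimpleGraph.not_isDiag_of_mem_edgeSet _ (hech1 k hk)
  have hcard : F.edgeSet.ncard = K := by
    rw [hFedge, Set.ncard_image_of_injOn hechinj, ← Finset.coe_range,
      Set.ncard_coe_finset, Finset.card_range]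
  have hHfree : ¬ HasCopy H F := by
    rintro ⟨f, finj, fadj⟩
    have hmem : ∀ a b, H.Adj a b → s(f a, f b) ∈ ech '' Set.Iio K := by
      intro a b hab
      rw [← hFedge]
      exact fadj a b hab
    set S : Finset ℕ :=
      (Finset.range K).filter (fun k => ∃ a b, H.Adj a b ∧ ech k = s(f a, f b)) with hSdef
    have hfin : H.edgeSet.Finite := by
      by_contra h
      have := Set.Infinite.ncard h
      omega
    obtain ⟨e₁, e₂, he₁, he₂, hee⟩ := (Set.one_lt_ncard_iff hfin).mp (by omega)
    obtain ⟨a₁, b₁, rfl⟩ : ∃ a b, e₁ = s(a, b) :=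
      Sym2.ind (fun x y => ⟨x, y, rfl⟩) e₁
    obtain ⟨a₂, b₂, rfl⟩ : ∃ a b, e₂ = s(a, b) :=
      Sym2.ind (fun x y => ⟨x, y, rfl⟩) e₂
    have hab₁ : H.Adj a₁ b₁ := (SimpleGraph.mem_edgeSet _).mp he₁
    have hab₂ : H.Adj a₂ b₂ := (SimpleGraph.mem_edgeSet _).mp he₂
    obtain ⟨k₁, hk₁K, hk₁e⟩ := hmem a₁ b₁ hab₁
    obtain ⟨k₂, hk₂K, hk₂e⟩ := hmem a₂ b₂ hab₂
    have himg_ne : s(f a₁, f b₁) ≠ s(f a₂, f b₂) := by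
      intro h
      apply hee
      have := Sym2.map.injective finj (a₁ := s(a₁, b₁)) (a₂ := s(a₂, b₂))
      simp only [Sym2.map_pair_eq] at this
      exact this h
    have hk₁S : k₁ ∈ S := by
      rw [hSdef, Finset.mem_filter]
      exact ⟨Finset.mem_range.mpr hk₁K, a₁, b₁, hab₁, hk₁e⟩
    have hk₂S : k₂ ∈ S := by
      rw [hSdef, Finset.mem_filter]
      exact ⟨Finset.mem_range.mpr hk₂K, a₂, b₂, hab₂, hk₂e⟩
    have hkk : k₁ ≠ k₂ := by
      intro h
      exact himg_ne (by rw [← hk₁e, h, hk₂e])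
    have hSne : S.Nonempty := ⟨k₁, hk₁S⟩
    set i := S.max' hSne with hidef
    have hiS : i ∈ S := S.max'_mem hSne
    have hiK : i < K := Finset.mem_range.mp (Finset.mem_filter.mp hiS).1
    obtain ⟨a₀, b₀, h₀, hi_eq⟩ := (Finset.mem_filter.mp hiS).2
    have hScard : 1 < S.card := Finset.one_lt_card.mpr ⟨k₁, hk₁S, k₂, hk₂S, hkk⟩
    have hS' : (S.erase i).Nonempty := by
      rw [← Finset.card_pos, Finset.card_erase_of_mem hiS]
      omega
    set j := (S.erase i).max' hS' with hjdef
    have hjSe : j ∈ S.erase i := (S.erase i).max'_mem hS'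
    have hji : j < i :=
      lt_of_le_of_ne (S.le_max' j (Finset.mem_of_mem_erase hjSe)) (Finset.ne_of_mem_erase hjSe)
    have hjmax : ∀ k ∈ S, k ≠ i → k ≤ j := fun k hk hki =>
      (S.erase i).le_max' k (Finset.mem_erase.mpr ⟨hki, hk⟩)
    have hadj := bootStep_adj_of_copy_aux H (bootProc H G (2 * j + 1)) f finj a₀ b₀ h₀ ?_
    · have hstep : bootProc H G (2 * j + 1 + 1) = bootStep H (bootProc H G (2 * j + 1)) := rfl
      have hmem2 : s(f a₀, f b₀) ∈ (bootProc H G (2 * j + 1 + 1)).edgeSet := by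
        rw [hstep]
        exact hadj
      have hmem3 : s(f a₀, f b₀) ∈ (bootProc H G (2 * i)).edgeSet :=
        SimpleGraph.edgeSet_mono (hmono (by omega : 2 * j + 1 + 1 ≤ 2 * i)) hmem2
      exact hech2 i hiK (hi_eq ▸ hmem3)
    · intro a b hab
      by_cases heq : s(f a, f b) = s(f a₀, f b₀)
      · exact Or.inr heq
      · left
        obtain ⟨k, hkK, hk_eq⟩ := hmem a b hab
        have hkS : k ∈ S := by
          rw [hSdef, Finset.mem_filter]
          exact ⟨Finset.mem_range.mpr hkK, a, b, hab, hk_eq⟩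
        have hki : k ≠ i := by
          rintro rfl
          exact heq (by rw [← hk_eq, hi_eq])
        have hkj := hjmax k hkS hki
        have hm : s(f a, f b) ∈ (bootProc H G (2 * j + 1)).edgeSet := by
          rw [← hk_eq]
          exact SimpleGraph.edgeSet_mono (hmono (by omega : 2 * k + 1 ≤ 2 * j + 1)) (hech1 k hkK)
        exact (SimpleGraph.mem_edgeSet _).mp hm
  have hbdd : BddAbove {m | ∃ G' : SimpleGraph (Fin n), ¬ HasCopy H G' ∧ G'.edgeSet.ncard = m} := by
    refine ⟨Nat.card (Sym2 (Fin n)), ?_⟩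
    rintro m ⟨G', _, rfl⟩
    have := Set.ncard_le_ncard (Set.subset_univ G'.edgeSet) Set.finite_univ
    rwa [Set.ncard_univ] at this
  have hKle : K ≤ exNum n H := le_csSup hbdd ⟨F, hHfree, hcard⟩
  omega
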